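/- Let (X, d) be a compact, connected, locally connected metric space and let f : X → X be a covering map which is expanding: there exist ε > 0 and λ > 1 such that d(f(p), f(q)) ≥ λ·d(p,q) whenever d(p,q) < ε. Then there exists δ > 0 such that for every connected set C ⊆ X with diam(C) < δ and every n ≥ 1, each connected component of f⁻ⁿ(C) has diameter at most λ⁻ⁿ·diam(C) and is mapped homeomorphically onto C by fⁿ. -/

import Mathlib

open Set

/-- Diameter bound for a connected set mapping into a small set under an expanding map. -/
lemma stmt15_diam {X : Type*} [MetricSpace X] [CompactSpace X]
    (f : X → X) (ε lam : ℝ) (hε : 0 < ε) (hlam : 1 < lam)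
    (hexp : ∀ p q : X, dist p q < ε → lam * dist p q ≤ dist (f p) (f q))
    {C D : Set X} (hD : IsPreconnected D) (hsub : D ⊆ f ⁻¹' C)
    (hC : Metric.diam C < ε / 2) :
    Metric.diam D ≤ lam⁻¹ * Metric.diam C := by
  have hlam0 : (0:ℝ) < lam := lt_trans one_pos hlam
  have hdC : 0 ≤ Metric.diam C := Metric.diam_nonneg
  have hbC : Bornology.IsBounded C := isCompact_univ.isBounded.subset (subset_univ C)
  apply Metric.diam_le_of_forall_dist_le (by positivity)
  intro p hp q hq
  -- key : every point of D is within `diam C / lam` of `p`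
  have hkey : ∀ y ∈ D, dist p y ≤ lam⁻¹ * Metric.diam C := by
    have hsmall : lam⁻¹ * Metric.diam C < ε / 2 := by
      calc lam⁻¹ * Metric.diam C ≤ 1 * Metric.diam C := by
            apply mul_le_mul_of_nonneg_right _ hdC
            rw [inv_le_one_iff₀]; right; exact le_of_lt hlam
        _ = Metric.diam C := one_mul _
        _ < ε / 2 := hC
    by_contra hcon
    push_neg at hcon
    obtain ⟨y₀, hy₀D, hy₀⟩ := hcon
    set u : Set X := {y | dist p y < ε / 2} with hu
    set v : Set X := {y | lam⁻¹ * Metric.diam C < dist p y} with hv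
    have hDu : ∀ y ∈ D, y ∈ u → dist p y ≤ lam⁻¹ * Metric.diam C := by
      intro y hy hyu
      have h1 : dist p y < ε := lt_of_lt_of_le hyu (by linarith)
      have h2 : lam * dist p y ≤ dist (f p) (f y) := hexp p y h1
      have h3 : dist (f p) (f y) ≤ Metric.diam C :=
        Metric.dist_le_diam_of_mem hbC (hsub hp) (hsub hy)
      rw [inv_mul_eq_div, le_div_iff₀ hlam0, mul_comm]
      exact le_trans h2 h3
    have hcover : D ⊆ u ∪ v := by
      intro y hy
      rcases le_or_gt (dist p y) (lam⁻¹ * Metric.diam C) with h | h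
      · exact Or.inl (lt_of_le_of_lt h hsmall)
      · exact Or.inr h
    have hne : (D ∩ (u ∩ v)).Nonempty :=
      hD u v (isOpen_lt (continuous_const.dist continuous_id) continuous_const)
        (isOpen_lt continuous_const (continuous_const.dist continuous_id))
        hcover ⟨p, hp, by simp [hu, hε]⟩ ⟨y₀, hy₀D, hy₀⟩
    obtain ⟨y, hyD, hyu, hyv⟩ := hne
    exact absurd (hDu y hyD hyu) (not_le.mpr hyv)
  exact hkey q hq

/-- Each connected component of the preimage of a small connected set under a
trivialized covering map is mapped homeomorphically onto it. -/
lemma stmt15_homeo {X : Type*} [TopologicalSpace X] {f : X → X} (hcont : Continuous f)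
    {I : Type*} [TopologicalSpace I] [DiscreteTopology I] (t : Bundle.Trivialization I f)
    {C : Set X} (hC : IsConnected C) (hCb : C ⊆ t.baseSet) {x : X} (hx : x ∈ f ⁻¹' C) :
    ∃ e : ↥(connectedComponentIn (f ⁻¹' C) x) ≃ₜ ↥C,
      ∀ z : ↥(connectedComponentIn (f ⁻¹' C) x), (e z : X) = f (z : X) := by
  have hsrc : ∀ y ∈ f ⁻¹' C, y ∈ t.source := fun y hy => t.mem_source.mpr (hCb hy)
  set i : I := (t x).2 with hi
  set P : Set X := {y | y ∈ f ⁻¹' C ∧ (t y).2 = i} with hPdef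
  have htarget : ∀ c : X, c ∈ C → ((c, i) : X × I) ∈ t.target :=
    fun c hc => t.mem_target.mpr (hCb hc)
  set g : X → X := fun c => t.toOpenPartialHomeomorph.symm (c, i) with hg
  have hgf : ∀ c ∈ C, f (g c) = c := fun c hc => t.proj_symm_apply (htarget c hc)
  have hgP : ∀ c ∈ C, g c ∈ P := by
    intro c hc
    refine ⟨by rw [mem_preimage, hgf c hc]; exact hc, ?_⟩
    show (t (g c)).2 = i
    rw [t.apply_symm_apply (htarget c hc)]
  have htz : ∀ z ∈ P, t z = (f z, i) := by
    intro z hz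
    exact Prod.ext (t.coe_fst (hsrc z hz.1)) hz.2
  have hgfz : ∀ z ∈ P, g (f z) = z := by
    intro z hz
    have h : t.toOpenPartialHomeomorph.symm (t z) = z :=
      t.toOpenPartialHomeomorph.left_inv (hsrc z hz.1)
    rw [htz z hz] at h
    exact h
  have hgc : Continuous fun c : C => g (c : X) := by
    have h1 : ContinuousOn t.toOpenPartialHomeomorph.symm t.target :=
      t.toOpenPartialHomeomorph.continuousOn_symm
    exact h1.comp_continuous
      ((continuous_subtype_val.prodMk continuous_const))
      (fun c => htarget c c.2)
  let e0 : ↥P ≃ₜ ↥C :=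
    { toFun := fun z => ⟨f z, z.2.1⟩
      invFun := fun c => ⟨g c, hgP c c.2⟩
      left_inv := fun z => Subtype.ext (hgfz z z.2)
      right_inv := fun c => Subtype.ext (hgf c c.2)
      continuous_toFun := Continuous.subtype_mk (hcont.comp continuous_subtype_val) _
      continuous_invFun := Continuous.subtype_mk hgc _ }
  have hPconn : IsConnected P := by
    have : ConnectedSpace ↥C := Subtype.connectedSpace hC
    have hrange : range (fun c : C => g (c : X)) = P := by
      apply Set.eq_of_subset_of_subset
      · rintro _ ⟨c, rfl⟩; exact hgP c c.2
      · intro z hz; exact ⟨⟨f z, hz.1⟩, hgfz z hz⟩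
    rw [← hrange]
    exact isConnected_range hgc
  have hclopen : IsClopen ((Subtype.val : ↥(f ⁻¹' C) → X) ⁻¹' P) := by
    have hφ : Continuous fun z : ↥(f ⁻¹' C) => (t (z : X)).2 := by
      have h1 : ContinuousOn (fun y => (t y).2) t.source :=
        continuous_snd.comp_continuousOn t.toOpenPartialHomeomorph.continuousOn
      exact h1.comp_continuous continuous_subtype_val (fun z => hsrc z z.2)
    have heq : ((Subtype.val : ↥(f ⁻¹' C) → X) ⁻¹' P)
        = (fun z : ↥(f ⁻¹' C) => (t (z : X)).2) ⁻¹' {i} := by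
      ext z
      simp only [hPdef, mem_preimage, mem_setOf_eq, mem_singleton_iff]
      exact ⟨fun h => h.2, fun h => ⟨z.2, h⟩⟩
    rw [heq]
    exact (isClopen_discrete {i}).preimage hφ
  have hxP : x ∈ P := ⟨hx, rfl⟩
  have hDeq : connectedComponentIn (f ⁻¹' C) x = P := by
    apply subset_antisymm
    · rw [connectedComponentIn_eq_image hx]
      have h1 : connectedComponent (⟨x, hx⟩ : ↥(f ⁻¹' C)) ⊆ Subtype.val ⁻¹' P :=
        hclopen.connectedComponent_subset hxP
      exact (image_mono h1).trans (image_preimage_subset _ _)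
    · exact hPconn.isPreconnected.subset_connectedComponentIn hxP (fun z hz => hz.1)
  exact ⟨(Homeomorph.setCongr hDeq).trans e0, fun z => rfl⟩

/-- Let `f : X → X` be an expanding covering map of a compact,
connected, locally connected metric space (expanding with constants `ε > 0`,
`lam > 1`).  Then there is `δ > 0` such that for every connected `C` of diameter
`< δ` and every `n ≥ 1`, each component of `f^[n] ⁻¹' C` has diameter at most
`lam⁻ⁿ · diam C` and is mapped homeomorphically onto `C` by `f^[n]`. -/
theorem stmt15 {X : Type*} [MetricSpace X] [CompactSpace X] [ConnectedSpace X]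
    [LocallyConnectedSpace X]
    (f : X → X) (hf : IsCoveringMap f) (ε lam : ℝ) (hε : 0 < ε) (hlam : 1 < lam)
    (hexp : ∀ p q : X, dist p q < ε → lam * dist p q ≤ dist (f p) (f q)) :
    ∃ δ : ℝ, 0 < δ ∧ ∀ C : Set X, IsConnected C → Metric.diam C < δ →
      ∀ n : ℕ, 1 ≤ n → ∀ x ∈ (f^[n]) ⁻¹' C,
        Metric.diam (connectedComponentIn ((f^[n]) ⁻¹' C) x) ≤ (lam ^ n)⁻¹ * Metric.diam C ∧
        ∃ e : ↥(connectedComponentIn ((f^[n]) ⁻¹' C) x) ≃ₜ ↥C,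
          ∀ z : ↥(connectedComponentIn ((f^[n]) ⁻¹' C) x), (e z : X) = f^[n] (z : X) := by
  have hlam0 : (0:ℝ) < lam := lt_trans one_pos hlam
  have hsurj : Function.Surjective f := by
    have hcl : IsClopen (range f) :=
      ⟨(isCompact_range hf.continuous).isClosed, hf.isOpenMap.isOpen_range⟩
    exact Set.range_eq_univ.mp (hcl.eq_univ (range_nonempty f))
  haveI : ∀ p : X, Nonempty (f ⁻¹' {p}) := fun p =>
    let ⟨y, hy⟩ := hsurj p; ⟨⟨y, hy⟩⟩
  -- Lebesgue number for the covering by trivialization base sets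
  obtain ⟨r, hr, hball⟩ := lebesgue_number_lemma_of_metric (isCompact_univ : IsCompact (univ : Set X))
    (fun p : X => (hf p).toTrivialization.open_baseSet)
    (fun y _ => mem_iUnion.mpr ⟨y, (hf y).mem_toTrivialization_baseSet⟩)
  refine ⟨min r (ε / 2), lt_min hr (by linarith), ?_⟩
  intro C hC hCd
  have hCr : Metric.diam C < r := lt_of_lt_of_le hCd (min_le_left _ _)
  have hCε : Metric.diam C < ε / 2 := lt_of_lt_of_le hCd (min_le_right _ _)
  have hbC : Bornology.IsBounded C := isCompact_univ.isBounded.subset (subset_univ C)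
  -- the base case statement, for any connected set of diameter < δ
  have main1 : ∀ C : Set X, IsConnected C → Metric.diam C < r → Metric.diam C < ε / 2 →
      ∀ x ∈ f ⁻¹' C,
        Metric.diam (connectedComponentIn (f ⁻¹' C) x) ≤ lam⁻¹ * Metric.diam C ∧
        ∃ e : ↥(connectedComponentIn (f ⁻¹' C) x) ≃ₜ ↥C,
          ∀ z : ↥(connectedComponentIn (f ⁻¹' C) x), (e z : X) = f (z : X) := by
    intro C hC hCr hCε x hx
    obtain ⟨c₀, hc₀⟩ := hC.nonempty
    obtain ⟨p, hp⟩ := hball c₀ (mem_univ c₀)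
    have hCb : C ⊆ (hf p).toTrivialization.baseSet := by
      intro y hy
      apply hp
      rw [Metric.mem_ball]
      exact lt_of_le_of_lt
        (Metric.dist_le_diam_of_mem (isCompact_univ.isBounded.subset (subset_univ C)) hy hc₀) hCr
    have hdisc : DiscreteTopology (f ⁻¹' {p}) := (hf p).1
    refine ⟨?_, stmt15_homeo hf.continuous (hf p).toTrivialization hC hCb hx⟩
    exact stmt15_diam f ε lam hε hlam hexp
      (isPreconnected_connectedComponentIn)
      (connectedComponentIn_subset _ _) hCε
  -- induction on n
  intro n hn
  induction n, hn using Nat.le_induction with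
  | base =>
    intro x hx
    rw [Function.iterate_one] at hx ⊢
    obtain ⟨h1, e, he⟩ := main1 C hC hCr hCε x hx
    refine ⟨by rw [pow_one]; exact h1, e, he⟩
  | succ n hn ih =>
    intro x hx
    have hiter : (f^[n + 1]) ⁻¹' C = f ⁻¹' ((f^[n]) ⁻¹' C) := by
      rw [Function.iterate_succ]
      exact Set.preimage_comp
    have hfx : f x ∈ (f^[n]) ⁻¹' C := by
      rw [mem_preimage, ← Function.iterate_succ_apply]
      exact hx
    set E : Set X := connectedComponentIn ((f^[n]) ⁻¹' C) (f x) with hE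
    obtain ⟨hEd, eE, heE⟩ := ih (f x) hfx
    have hEconn : IsConnected E :=
      (isConnected_connectedComponentIn_iff).mpr hfx
    have hdCnn : 0 ≤ Metric.diam C := Metric.diam_nonneg
    have hpow : ((lam ^ n)⁻¹ : ℝ) ≤ 1 := by
      rw [inv_le_one_iff₀]; right; exact one_le_pow₀ (le_of_lt hlam)
    have hEdr : Metric.diam E < r :=
      lt_of_le_of_lt (hEd.trans (by nlinarith)) hCr
    have hEdε : Metric.diam E < ε / 2 :=
      lt_of_le_of_lt (hEd.trans (by nlinarith)) hCε
    have hxE : x ∈ f ⁻¹' E := mem_connectedComponentIn hfx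
    -- identify the component at level n+1 with the component in f ⁻¹' E
    have hDeq : connectedComponentIn ((f^[n + 1]) ⁻¹' C) x = connectedComponentIn (f ⁻¹' E) x := by
      apply subset_antisymm
      · have hDconn : IsPreconnected (connectedComponentIn ((f^[n + 1]) ⁻¹' C) x) :=
          isPreconnected_connectedComponentIn
        have hxD : x ∈ connectedComponentIn ((f^[n + 1]) ⁻¹' C) x :=
          mem_connectedComponentIn (by exact hx)
        apply hDconn.subset_connectedComponentIn hxD
        -- the image under f of the component is connected in (f^[n])⁻¹' C, so lies in E
        have himg : f '' (connectedComponentIn ((f^[n + 1]) ⁻¹' C) x) ⊆ E := by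
          apply IsPreconnected.subset_connectedComponentIn
          · exact hDconn.image f (hf.continuous.continuousOn)
          · exact ⟨x, hxD, rfl⟩
          · rintro _ ⟨z, hz, rfl⟩
            have : z ∈ (f^[n + 1]) ⁻¹' C := connectedComponentIn_subset _ _ hz
            rw [mem_preimage, Function.iterate_succ_apply] at this
            exact this
        intro z hz
        exact himg ⟨z, hz, rfl⟩
      · have h1 : f ⁻¹' E ⊆ (f^[n + 1]) ⁻¹' C := by
          rw [hiter]
          exact preimage_mono (connectedComponentIn_subset _ _)
        exact connectedComponentIn_mono x h1
    obtain ⟨hDd, eD, heD⟩ := main1 E hEconn hEdr hEdε x hxE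
    constructor
    · rw [hDeq]
      calc Metric.diam (connectedComponentIn (f ⁻¹' E) x)
          ≤ lam⁻¹ * Metric.diam E := hDd
        _ ≤ lam⁻¹ * ((lam ^ n)⁻¹ * Metric.diam C) := by
            apply mul_le_mul_of_nonneg_left hEd (by positivity)
        _ = (lam ^ (n + 1))⁻¹ * Metric.diam C := by
            rw [pow_succ, mul_inv]
            ring
    · refine ⟨((Homeomorph.setCongr hDeq).trans eD).trans eE, ?_⟩
      intro z
      have h1 : ((eD ((Homeomorph.setCongr hDeq) z) : X)) = f (z : X) :=
        heD ((Homeomorph.setCongr hDeq) z)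
      have h2 := heE (eD ((Homeomorph.setCongr hDeq) z))
      rw [Homeomorph.trans_apply, Homeomorph.trans_apply, h2, h1,
        Function.iterate_succ_apply]
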